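/- Proposition 2 (the variance-reduced attack decreases interactions; precise second-order form): let n ≥ 2, ĝ ∈ ℝⁿ, and Ĥ a symmetric n × n real matrix. On a probability space, let (ε_a)_{1≤a≤n} together with (η_{ab})_{1≤a≤b≤n} be a jointly independent family of square-integrable real random variables, each with mean zero, and extend η by symmetry (η_{ba} = η_{ab}). Define the random gradient g_a = ĝ_a + ε_a and random Hessian H_{ab} = Ĥ_{ab} + η_{ab}. For fixed α ≥ 0 and natural number m ≥ 1, define the second-order total interaction functional S(u, M) = ∑_{a≠b} [α²·m²·u_a·u_b·M_{ab} + (α³·(m−1)·m²/2)·(u_a·M_{ab}·∑_{a'=1}^{n} M_{a'b}·u_{a'} + u_b·M_{ab}·∑_{b'=1}^{n} M_{ab'}·u_{b'})]. Then every summand of S(g, H) is integrable and S(ĝ, Ĥ) ≤ E[S(g, H)], i.e. the total second-order interaction computed from the smoothed (mean) gradient and Hessian is at most the expected total second-order interaction computed from the noisy gradient and Hessian. -/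

import Mathlib

open MeasureTheory ProbabilityTheory Finset

/-- The second-order total interaction functional of Proposition 2:
`S(u, M) = ∑_{a≠b} [α²·m²·u_a·u_b·M_{ab}
  + (α³·(m−1)·m²/2)·(u_a·M_{ab}·∑_{a'} M_{a'b}·u_{a'} + u_b·M_{ab}·∑_{b'} M_{ab'}·u_{b'})]`. -/
noncomputable def totalSecondOrderInteraction (n : ℕ) (α : ℝ) (m : ℕ)
    (u : Fin n → ℝ) (M : Fin n → Fin n → ℝ) : ℝ :=
  ∑ a : Fin n, ∑ b ∈ Finset.univ.erase a,
    (α ^ 2 * (m : ℝ) ^ 2 * (u a * u b * M a b) +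
      (α ^ 3 * ((m : ℝ) - 1) * (m : ℝ) ^ 2 / 2) *
        (u a * M a b * ∑ a' : Fin n, M a' b * u a' +
          u b * M a b * ∑ b' : Fin n, M a b' * u b'))

/-! ### Auxiliary machinery -/

/-- The canonical index of the pair `(a, b)` in the index type of the independent family. -/
private def pairIdx {n : ℕ} (a b : Fin n) : Fin n ⊕ {p : Fin n × Fin n // p.1 ≤ p.2} :=
  if h : a ≤ b then Sum.inr ⟨(a, b), h⟩ else Sum.inr ⟨(b, a), le_of_not_ge h⟩

private lemma pairIdx_symm {n : ℕ} (a b : Fin n) : pairIdx a b = pairIdx b a := by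
  unfold pairIdx
  rcases le_or_gt a b with h | h
  · rcases eq_or_lt_of_le h with rfl | h'
    · simp
    · rw [dif_pos h, dif_neg (not_le.2 h')]
  · rw [dif_neg (not_le.2 h), dif_pos h.le]

private lemma pairIdx_ne_inl {n : ℕ} (a b c : Fin n) : pairIdx a b ≠ Sum.inl c := by
  unfold pairIdx; split <;> simp

private lemma pairIdx_inj {n : ℕ} {a b c d : Fin n} (h : pairIdx a b = pairIdx c d) :
    (a = c ∧ b = d) ∨ (a = d ∧ b = c) := by
  unfold pairIdx at h
  split_ifs at h with h1 h2 h2 <;>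
    simp only [Sum.inr.injEq, Subtype.mk.injEq, Prod.mk.injEq] at h
  · exact Or.inl h
  · exact Or.inr h
  · exact Or.inr ⟨h.2, h.1⟩
  · exact Or.inl ⟨h.2, h.1⟩

/-- Transfer of joint independence along a.e. equality. -/
private lemma VR_iIndepFun_congr_ae {Ω ι : Type*} [MeasurableSpace Ω] {μ : Measure Ω}
    {f g : ι → Ω → ℝ} (h : iIndepFun f μ)
    (hfg : ∀ i, f i =ᵐ[μ] g i) : iIndepFun g μ := by
  rw [iIndepFun_iff_measure_inter_preimage_eq_mul] at h ⊢
  intro S sets hsets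
  have hset : ∀ i : ι, (f i ⁻¹' sets i : Set Ω) =ᵐ[μ] (g i ⁻¹' sets i) := by
    intro i
    filter_upwards [hfg i] with ω hω
    exact congrArg (· ∈ sets i) hω
  have hall : ∀ᵐ ω ∂μ, ∀ i ∈ (S : Set ι), f i ω = g i ω :=
    (ae_ball_iff S.countable_toSet).2 fun i _ => hfg i
  have hInter : ((⋂ i ∈ S, g i ⁻¹' sets i : Set Ω)) =ᵐ[μ] (⋂ i ∈ S, f i ⁻¹' sets i) := by
    filter_upwards [hall] with ω hω
    have hmem : ∀ j ∈ S, (ω ∈ f j ⁻¹' sets j ↔ ω ∈ g j ⁻¹' sets j) := by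
      intro j hj
      simp only [Set.mem_preimage, hω j (Finset.mem_coe.2 hj)]
    show (ω ∈ ⋂ i ∈ S, g i ⁻¹' sets i) = (ω ∈ ⋂ i ∈ S, f i ⁻¹' sets i)
    rw [eq_iff_iff, Set.mem_iInter₂, Set.mem_iInter₂]
    exact ⟨fun h' j hj => (hmem j hj).2 (h' j hj), fun h' j hj => (hmem j hj).1 (h' j hj)⟩
  calc μ (⋂ i ∈ S, g i ⁻¹' sets i) = μ (⋂ i ∈ S, f i ⁻¹' sets i) := measure_congr hInter
    _ = ∏ i ∈ S, μ (f i ⁻¹' sets i) := h S hsets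
    _ = ∏ i ∈ S, μ (g i ⁻¹' sets i) := Finset.prod_congr rfl fun i _ => measure_congr (hset i)

/-- The product of finitely many jointly independent integrable random variables is
integrable with integral the product of the integrals. -/
private lemma VR_integral_prod {Ω ι : Type*} [MeasurableSpace Ω] {μ : Measure Ω}
    [IsProbabilityMeasure μ] {W : ι → Ω → ℝ}
    (hindep : iIndepFun W μ) (hmeas : ∀ i, Measurable (W i))
    (h1 : ∀ i, Integrable (W i) μ) (s : Finset ι) :
    Integrable (fun ω => ∏ i ∈ s, W i ω) μ ∧
      ∫ ω, ∏ i ∈ s, W i ω ∂μ = ∏ i ∈ s, ∫ ω, W i ω ∂μ := by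
  classical
  refine Finset.induction_on s ⟨by simpa using (integrable_const (1 : ℝ)), by simp⟩ ?_
  intro a s ha ih
  have heq : (∏ j ∈ s, W j) = fun ω => ∏ i ∈ s, W i ω := by funext ω; simp
  have hip : IndepFun (fun ω => ∏ i ∈ s, W i ω) (W a) μ := by
    rw [← heq]; exact hindep.indepFun_finsetProd_of_notMem hmeas ha
  have hint : Integrable (fun ω => W a ω * ∏ i ∈ s, W i ω) μ :=
    hip.symm.integrable_mul (h1 a) ih.1
  have hintegral : ∫ ω, W a ω * ∏ i ∈ s, W i ω ∂μ
      = (∫ ω, W a ω ∂μ) * ∫ ω, ∏ i ∈ s, W i ω ∂μ :=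
    hip.symm.integral_mul_eq_mul_integral (h1 a).1 ih.1.1
  constructor
  · simpa only [Finset.prod_insert ha] using hint
  · simp only [Finset.prod_insert ha]
    rw [hintegral, ih.2]

/-- Proposition 2 (the variance-reduced attack decreases interactions; precise second-order
form): with smoothed gradient `ĝ` (`ghat`) and symmetric smoothed Hessian `Ĥ` (`Hhat`), and
noisy versions `g_a = ĝ_a + ε_a`, `H_{ab} = Ĥ_{ab} + η_{ab}` where the `ε_a` together with
the `η_{ab}` (for `a ≤ b`, extended by symmetry) form a jointly independent family of
square-integrable mean-zero random variables, every summand of `S(g, H)` is integrable and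
`S(ĝ, Ĥ) ≤ E[S(g, H)]`. -/
theorem vr_attack_decreases_interaction (n : ℕ) (hn : 2 ≤ n)
    (ghat : Fin n → ℝ) (Hhat : Matrix (Fin n) (Fin n) ℝ)
    (hHsymm : ∀ a b, Hhat a b = Hhat b a)
    {Ω : Type*} [MeasurableSpace Ω] (μ : Measure Ω) [IsProbabilityMeasure μ]
    (ε : Fin n → Ω → ℝ) (η : Fin n → Fin n → Ω → ℝ)
    (hηsymm : ∀ a b, η b a = η a b)
    (hindep : iIndepFun
      (Sum.elim ε (fun p : {p : Fin n × Fin n // p.1 ≤ p.2} => η p.1.1 p.1.2)) μ)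
    (hε2 : ∀ a, MemLp (ε a) 2 μ) (hεmean : ∀ a, ∫ ω, ε a ω ∂μ = 0)
    (hη2 : ∀ a b, MemLp (η a b) 2 μ) (hηmean : ∀ a b, ∫ ω, η a b ω ∂μ = 0)
    (α : ℝ) (hα : 0 ≤ α) (m : ℕ) (hm : 1 ≤ m) :
    (∀ a b : Fin n, a ≠ b →
      Integrable (fun ω =>
        α ^ 2 * (m : ℝ) ^ 2 *
            ((ghat a + ε a ω) * (ghat b + ε b ω) * (Hhat a b + η a b ω)) +
          (α ^ 3 * ((m : ℝ) - 1) * (m : ℝ) ^ 2 / 2) *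
            ((ghat a + ε a ω) * (Hhat a b + η a b ω) *
                ∑ a' : Fin n, (Hhat a' b + η a' b ω) * (ghat a' + ε a' ω) +
              (ghat b + ε b ω) * (Hhat a b + η a b ω) *
                ∑ b' : Fin n, (Hhat a b' + η a b' ω) * (ghat b' + ε b' ω))) μ) ∧
    totalSecondOrderInteraction n α m ghat (fun a b => Hhat a b) ≤
      ∫ ω, totalSecondOrderInteraction n α m (fun a => ghat a + ε a ω)
        (fun a b => Hhat a b + η a b ω) ∂μ := by
  classical
  set Y : (Fin n ⊕ {p : Fin n × Fin n // p.1 ≤ p.2}) → Ω → ℝ :=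
    Sum.elim ε (fun p => η p.1.1 p.1.2) with hYdef
  have hY2 : ∀ i, MemLp (Y i) 2 μ := by rintro (a | p); exacts [hε2 a, hη2 p.1.1 p.1.2]
  have hYmean : ∀ i, ∫ ω, Y i ω ∂μ = 0 := by
    rintro (a | p); exacts [hεmean a, hηmean p.1.1 p.1.2]
  have hYam : ∀ i, AEMeasurable (Y i) μ := fun i => (hY2 i).1.aemeasurable
  set Y' : (Fin n ⊕ {p : Fin n × Fin n // p.1 ≤ p.2}) → Ω → ℝ :=
    fun i => (hYam i).mk (Y i) with hY'def
  have hY'meas : ∀ i, Measurable (Y' i) := fun i => (hYam i).measurable_mk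
  have hYY' : ∀ i, Y i =ᵐ[μ] Y' i := fun i => (hYam i).ae_eq_mk
  have hindepY' : iIndepFun Y' μ :=
    VR_iIndepFun_congr_ae hindep hYY'
  have hY'2 : ∀ i, MemLp (Y' i) 2 μ := fun i => (hY2 i).ae_eq (hYY' i)
  have hY'1 : ∀ i, Integrable (Y' i) μ := fun i => (hY'2 i).integrable one_le_two
  have hY'mean : ∀ i, ∫ ω, Y' i ω ∂μ = 0 := fun i => by
    rw [← integral_congr_ae (hYY' i)]; exact hYmean i
  set C : (Fin n ⊕ {p : Fin n × Fin n // p.1 ≤ p.2}) → ℝ :=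
    Sum.elim ghat (fun p => Hhat p.1.1 p.1.2) with hCdef
  set W : (Fin n ⊕ {p : Fin n × Fin n // p.1 ≤ p.2}) → Ω → ℝ :=
    fun i ω => C i + Y' i ω with hWdef
  have hWmeas : ∀ i, Measurable (W i) := fun i => measurable_const.add (hY'meas i)
  have hW2 : ∀ i, MemLp (W i) 2 μ := fun i => (memLp_const (C i)).add (hY'2 i)
  have hW1 : ∀ i, Integrable (W i) μ := fun i => (hW2 i).integrable one_le_two
  have hWindep : iIndepFun W μ :=
    hindepY'.comp (fun i x => C i + x) (fun i => measurable_const.add measurable_id)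
  have hWint : ∀ i, ∫ ω, W i ω ∂μ = C i := fun i => by
    show ∫ ω, (C i + Y' i ω) ∂μ = C i
    rw [integral_add (integrable_const _) (hY'1 i), integral_const, probReal_univ, hY'mean i]
    simp
  have hCinl : ∀ a, C (Sum.inl a) = ghat a := fun a => rfl
  have hCidx : ∀ a b, C (pairIdx a b) = Hhat a b := by
    intro a b; unfold pairIdx; split
    · rfl
    · exact hHsymm b a
  have hYinl : ∀ a, Y (Sum.inl a) = ε a := fun a => rfl
  have hYidx : ∀ a b, Y (pairIdx a b) = η a b := by
    intro a b; unfold pairIdx; split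
    · rfl
    · exact hηsymm a b
  -- product integral lemmas specialised
  have key3 : ∀ i j k, i ≠ j → i ≠ k → j ≠ k →
      Integrable (fun ω => W i ω * W j ω * W k ω) μ ∧
      ∫ ω, W i ω * W j ω * W k ω ∂μ = C i * C j * C k := by
    intro i j k hij hik hjk
    have h := VR_integral_prod hWindep hWmeas hW1 {i, j, k}
    have hp : ∀ ω, ∏ x ∈ ({i, j, k} : Finset _), W x ω = W i ω * W j ω * W k ω := by
      intro ω
      rw [Finset.prod_insert (by simp [hij, hik]), Finset.prod_insert (by simp [hjk]),
        Finset.prod_singleton, mul_assoc]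
    simp only [hp] at h
    refine ⟨h.1, ?_⟩
    rw [h.2, Finset.prod_insert (by simp [hij, hik]), Finset.prod_insert (by simp [hjk]),
      Finset.prod_singleton, hWint, hWint, hWint, mul_assoc]
  have key4 : ∀ i j k l, i ≠ j → i ≠ k → i ≠ l → j ≠ k → j ≠ l → k ≠ l →
      Integrable (fun ω => W i ω * W j ω * (W k ω * W l ω)) μ ∧
      ∫ ω, W i ω * W j ω * (W k ω * W l ω) ∂μ = C i * C j * (C k * C l) := by
    intro i j k l hij hik hil hjk hjl hkl
    have h := VR_integral_prod hWindep hWmeas hW1 {i, j, k, l}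
    have hp : ∀ ω, ∏ x ∈ ({i, j, k, l} : Finset _), W x ω
        = W i ω * W j ω * (W k ω * W l ω) := by
      intro ω
      rw [Finset.prod_insert (by simp [hij, hik, hil]),
        Finset.prod_insert (by simp [hjk, hjl]), Finset.prod_insert (by simp [hkl]),
        Finset.prod_singleton]
      ring
    simp only [hp] at h
    refine ⟨h.1, ?_⟩
    rw [h.2, Finset.prod_insert (by simp [hij, hik, hil]),
      Finset.prod_insert (by simp [hjk, hjl]), Finset.prod_insert (by simp [hkl]),
      Finset.prod_singleton, hWint, hWint, hWint, hWint]
    ring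
  have keySq : ∀ i j, i ≠ j →
      Integrable (fun ω => W i ω * W j ω * (W j ω * W i ω)) μ ∧
      C i * C j * (C j * C i) ≤ ∫ ω, W i ω * W j ω * (W j ω * W i ω) ∂μ := by
    intro i j hij
    have hfe : (fun ω => W i ω * W j ω * (W j ω * W i ω))
        = fun ω => (W i ω) ^ 2 * (W j ω) ^ 2 := by funext ω; ring
    have hIndep : IndepFun (W i) (W j) μ := hWindep.indepFun hij
    have hIndep2 : IndepFun (fun ω => (W i ω) ^ 2) (fun ω => (W j ω) ^ 2) μ :=
      hIndep.comp (measurable_id.pow_const 2) (measurable_id.pow_const 2)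
    have hI1 : Integrable (fun ω => (W i ω) ^ 2) μ := (hW2 i).integrable_sq
    have hI2 : Integrable (fun ω => (W j ω) ^ 2) μ := (hW2 j).integrable_sq
    have hImul : Integrable (fun ω => (W i ω) ^ 2 * (W j ω) ^ 2) μ :=
      hIndep2.integrable_mul hI1 hI2
    have hEq : ∫ ω, (W i ω) ^ 2 * (W j ω) ^ 2 ∂μ
        = (∫ ω, (W i ω) ^ 2 ∂μ) * ∫ ω, (W j ω) ^ 2 ∂μ :=
      hIndep2.integral_mul_eq_mul_integral hI1.1 hI2.1
    have hvar : ∀ k, (C k) ^ 2 ≤ ∫ ω, (W k ω) ^ 2 ∂μ := by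
      intro k
      have i1 : Integrable (fun ω => (W k ω) ^ 2) μ := (hW2 k).integrable_sq
      have i2 : Integrable (fun ω => (2 * C k) * W k ω) μ := (hW1 k).const_mul _
      have h0 : 0 ≤ ∫ ω, (W k ω - C k) ^ 2 ∂μ := integral_nonneg fun ω => sq_nonneg _
      have hfe2 : (fun ω => (W k ω - C k) ^ 2)
          = fun ω => ((W k ω) ^ 2 - (2 * C k) * W k ω) + C k ^ 2 := by
        funext ω; ring
      have i12 : Integrable (fun ω => (W k ω) ^ 2 - (2 * C k) * W k ω) μ := i1.sub i2
      rw [hfe2, integral_add i12 (integrable_const _),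
        integral_sub i1 i2, integral_const_mul, hWint k, integral_const, probReal_univ] at h0
      simp only [ENNReal.toReal_one, smul_eq_mul, one_mul] at h0
      nlinarith [h0]
    constructor
    · rw [hfe]; exact hImul
    · calc C i * C j * (C j * C i) = C i ^ 2 * C j ^ 2 := by ring
        _ ≤ (∫ ω, (W i ω) ^ 2 ∂μ) * ∫ ω, (W j ω) ^ 2 ∂μ :=
            mul_le_mul (hvar i) (hvar j) (sq_nonneg _) ((sq_nonneg (C i)).trans (hvar i))
        _ = ∫ ω, W i ω * W j ω * (W j ω * W i ω) ∂μ := by rw [hfe, hEq]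
  -- the key per-term bound
  have key : ∀ x y z : Fin n, x ≠ y →
      Integrable (fun ω => W (Sum.inl x) ω * W (pairIdx x y) ω *
        (W (pairIdx z y) ω * W (Sum.inl z) ω)) μ ∧
      ghat x * Hhat x y * (Hhat z y * ghat z) ≤
        ∫ ω, W (Sum.inl x) ω * W (pairIdx x y) ω *
          (W (pairIdx z y) ω * W (Sum.inl z) ω) ∂μ := by
    intro x y z hxy
    by_cases hzx : z = x
    · subst hzx
      have h := keySq (Sum.inl z) (pairIdx z y) (fun h => pairIdx_ne_inl _ _ _ h.symm)
      refine ⟨h.1, ?_⟩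
      calc ghat z * Hhat z y * (Hhat z y * ghat z)
          = C (Sum.inl z) * C (pairIdx z y) * (C (pairIdx z y) * C (Sum.inl z)) := by
            rw [hCinl, hCidx]
        _ ≤ _ := h.2
    · have d1 : (Sum.inl x : Fin n ⊕ _) ≠ pairIdx x y := fun h => pairIdx_ne_inl _ _ _ h.symm
      have d2 : (Sum.inl x : Fin n ⊕ _) ≠ pairIdx z y := fun h => pairIdx_ne_inl _ _ _ h.symm
      have d3 : (Sum.inl x : Fin n ⊕ {p : Fin n × Fin n // p.1 ≤ p.2}) ≠ Sum.inl z := by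
        intro h; injection h with h'; exact hzx h'.symm
      have d4 : pairIdx x y ≠ pairIdx z y := by
        intro h
        rcases pairIdx_inj h with ⟨h1, _⟩ | ⟨h1, h2⟩
        · exact hzx h1.symm
        · exact hxy h1
      have d5 : pairIdx x y ≠ Sum.inl z := pairIdx_ne_inl _ _ _
      have d6 : pairIdx z y ≠ Sum.inl z := pairIdx_ne_inl _ _ _
      have h := key4 (Sum.inl x) (pairIdx x y) (pairIdx z y) (Sum.inl z) d1 d2 d3 d4 d5 d6
      refine ⟨h.1, le_of_eq ?_⟩
      rw [h.2, hCinl, hCinl, hCidx, hCidx]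
  -- constants
  set k2 : ℝ := α ^ 2 * (m : ℝ) ^ 2 with hk2
  set k3 : ℝ := α ^ 3 * ((m : ℝ) - 1) * (m : ℝ) ^ 2 / 2 with hk3
  have h1m : (1 : ℝ) ≤ (m : ℝ) := by exact_mod_cast hm
  have hk3nn : 0 ≤ k3 := by
    rw [hk3]
    apply div_nonneg _ (by norm_num)
    exact mul_nonneg (mul_nonneg (pow_nonneg hα 3) (by linarith)) (sq_nonneg _)
  -- the nice representative
  set F' : Fin n → Fin n → Ω → ℝ := fun a b ω =>
    k2 * (W (Sum.inl a) ω * W (Sum.inl b) ω * W (pairIdx a b) ω) +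
    k3 * (W (Sum.inl a) ω * W (pairIdx a b) ω *
        ∑ a' : Fin n, W (pairIdx a' b) ω * W (Sum.inl a') ω +
      W (Sum.inl b) ω * W (pairIdx a b) ω *
        ∑ b' : Fin n, W (pairIdx a b') ω * W (Sum.inl b') ω) with hF'def
  have hall : ∀ᵐ ω ∂μ, ∀ i, Y i ω = Y' i ω := by
    rw [ae_all_iff]; exact hYY'
  have hae : ∀ a b : Fin n, (fun ω =>
      k2 * ((ghat a + ε a ω) * (ghat b + ε b ω) * (Hhat a b + η a b ω)) +
        k3 * ((ghat a + ε a ω) * (Hhat a b + η a b ω) *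
            ∑ a' : Fin n, (Hhat a' b + η a' b ω) * (ghat a' + ε a' ω) +
          (ghat b + ε b ω) * (Hhat a b + η a b ω) *
            ∑ b' : Fin n, (Hhat a b' + η a b' ω) * (ghat b' + ε b' ω)))
      =ᵐ[μ] F' a b := by
    intro a b
    filter_upwards [hall] with ω hω
    have geq : ∀ c, ghat c + ε c ω = W (Sum.inl c) ω := by
      intro c
      show ghat c + ε c ω = C (Sum.inl c) + Y' (Sum.inl c) ω
      rw [hCinl, ← hω (Sum.inl c)]
      rfl
    have Heq : ∀ c d, Hhat c d + η c d ω = W (pairIdx c d) ω := by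
      intro c d
      show Hhat c d + η c d ω = C (pairIdx c d) + Y' (pairIdx c d) ω
      rw [hCidx, ← hω (pairIdx c d), hYidx]
    simp only [hF'def, geq, Heq]
  -- integrability of the pieces of F'
  have hT1 : ∀ a b : Fin n, a ≠ b →
      Integrable (fun ω => W (Sum.inl a) ω * W (Sum.inl b) ω * W (pairIdx a b) ω) μ ∧
      ∫ ω, W (Sum.inl a) ω * W (Sum.inl b) ω * W (pairIdx a b) ω ∂μ
        = ghat a * ghat b * Hhat a b := by
    intro a b hab
    have h := key3 (Sum.inl a) (Sum.inl b) (pairIdx a b)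
      (fun h => hab (Sum.inl.inj h))
      (fun h => pairIdx_ne_inl a b a h.symm)
      (fun h => pairIdx_ne_inl a b b h.symm)
    refine ⟨h.1, ?_⟩
    rw [h.2, hCinl, hCinl, hCidx]
  have hS1eq : ∀ a b : Fin n,
      (fun ω => W (Sum.inl a) ω * W (pairIdx a b) ω *
          ∑ a' : Fin n, W (pairIdx a' b) ω * W (Sum.inl a') ω)
      = fun ω => ∑ a' : Fin n, W (Sum.inl a) ω * W (pairIdx a b) ω *
          (W (pairIdx a' b) ω * W (Sum.inl a') ω) := by
    intro a b; funext ω; rw [Finset.mul_sum]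
  have hS2eq : ∀ a b : Fin n,
      (fun ω => W (Sum.inl b) ω * W (pairIdx a b) ω *
          ∑ b' : Fin n, W (pairIdx a b') ω * W (Sum.inl b') ω)
      = fun ω => ∑ b' : Fin n, W (Sum.inl b) ω * W (pairIdx a b) ω *
          (W (pairIdx a b') ω * W (Sum.inl b') ω) := by
    intro a b; funext ω; rw [Finset.mul_sum]
  -- the second sum is the first sum with the roles of `a` and `b` (and symmetry) swapped
  have key2 : ∀ a b b' : Fin n, a ≠ b →
      Integrable (fun ω => W (Sum.inl b) ω * W (pairIdx a b) ω *
        (W (pairIdx a b') ω * W (Sum.inl b') ω)) μ ∧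
      ghat b * Hhat a b * (Hhat a b' * ghat b') ≤
        ∫ ω, W (Sum.inl b) ω * W (pairIdx a b) ω *
          (W (pairIdx a b') ω * W (Sum.inl b') ω) ∂μ := by
    intro a b b' hab
    have h := key b a b' (fun h => hab h.symm)
    rw [pairIdx_symm b a, pairIdx_symm b' a] at h
    refine ⟨h.1, ?_⟩
    rw [hHsymm a b, hHsymm a b']
    exact h.2
  have hintS1 : ∀ a b : Fin n, a ≠ b →
      Integrable (fun ω => W (Sum.inl a) ω * W (pairIdx a b) ω *
        ∑ a' : Fin n, W (pairIdx a' b) ω * W (Sum.inl a') ω) μ := by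
    intro a b hab
    rw [hS1eq a b]
    exact integrable_finset_sum _ (fun a' _ => (key a b a' hab).1)
  have hintS2 : ∀ a b : Fin n, a ≠ b →
      Integrable (fun ω => W (Sum.inl b) ω * W (pairIdx a b) ω *
        ∑ b' : Fin n, W (pairIdx a b') ω * W (Sum.inl b') ω) μ := by
    intro a b hab
    rw [hS2eq a b]
    exact integrable_finset_sum _ (fun b' _ => (key2 a b b' hab).1)
  have hF'int : ∀ a b : Fin n, a ≠ b → Integrable (F' a b) μ := by
    intro a b hab
    exact (((hT1 a b hab).1.const_mul k2).add
      (((hintS1 a b hab).add (hintS2 a b hab)).const_mul k3))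
  have part1 : ∀ a b : Fin n, a ≠ b →
      Integrable (fun ω =>
        k2 * ((ghat a + ε a ω) * (ghat b + ε b ω) * (Hhat a b + η a b ω)) +
          k3 * ((ghat a + ε a ω) * (Hhat a b + η a b ω) *
              ∑ a' : Fin n, (Hhat a' b + η a' b ω) * (ghat a' + ε a' ω) +
            (ghat b + ε b ω) * (Hhat a b + η a b ω) *
              ∑ b' : Fin n, (Hhat a b' + η a b' ω) * (ghat b' + ε b' ω))) μ :=
    fun a b hab => (hF'int a b hab).congr ((hae a b).symm)
  refine ⟨part1, ?_⟩
  -- now the inequality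
  simp only [totalSecondOrderInteraction]
  rw [integral_finset_sum _ (fun a _ => integrable_finset_sum _
    (fun b hb => part1 a b (Finset.mem_erase.1 hb).1.symm))]
  apply Finset.sum_le_sum
  intro a _
  rw [integral_finset_sum _ (fun b hb => part1 a b (Finset.mem_erase.1 hb).1.symm)]
  apply Finset.sum_le_sum
  intro b hb
  have hab : a ≠ b := (Finset.mem_erase.1 hb).1.symm
  rw [integral_congr_ae (hae a b)]
  have hint1 : ∫ ω, F' a b ω ∂μ =
      k2 * (∫ ω, W (Sum.inl a) ω * W (Sum.inl b) ω * W (pairIdx a b) ω ∂μ) +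
      k3 * ((∑ a' : Fin n, ∫ ω, W (Sum.inl a) ω * W (pairIdx a b) ω *
            (W (pairIdx a' b) ω * W (Sum.inl a') ω) ∂μ) +
          (∑ b' : Fin n, ∫ ω, W (Sum.inl b) ω * W (pairIdx a b) ω *
            (W (pairIdx a b') ω * W (Sum.inl b') ω) ∂μ)) := by
    have hA : Integrable (fun ω =>
        k2 * (W (Sum.inl a) ω * W (Sum.inl b) ω * W (pairIdx a b) ω)) μ :=
      (hT1 a b hab).1.const_mul k2
    have hB1 : Integrable (fun ω => W (Sum.inl a) ω * W (pairIdx a b) ω *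
        ∑ a' : Fin n, W (pairIdx a' b) ω * W (Sum.inl a') ω) μ := hintS1 a b hab
    have hB2 : Integrable (fun ω => W (Sum.inl b) ω * W (pairIdx a b) ω *
        ∑ b' : Fin n, W (pairIdx a b') ω * W (Sum.inl b') ω) μ := hintS2 a b hab
    have hB : Integrable (fun ω =>
        (W (Sum.inl a) ω * W (pairIdx a b) ω *
          ∑ a' : Fin n, W (pairIdx a' b) ω * W (Sum.inl a') ω) +
        (W (Sum.inl b) ω * W (pairIdx a b) ω *
          ∑ b' : Fin n, W (pairIdx a b') ω * W (Sum.inl b') ω)) μ := hB1.add hB2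
    have hkB : Integrable (fun ω => k3 *
        ((W (Sum.inl a) ω * W (pairIdx a b) ω *
          ∑ a' : Fin n, W (pairIdx a' b) ω * W (Sum.inl a') ω) +
        (W (Sum.inl b) ω * W (pairIdx a b) ω *
          ∑ b' : Fin n, W (pairIdx a b') ω * W (Sum.inl b') ω))) μ := hB.const_mul k3
    simp only [hF'def]
    rw [integral_add hA hkB, integral_const_mul, integral_const_mul, integral_add hB1 hB2,
      hS1eq a b, hS2eq a b, integral_finset_sum _ (fun a' _ => (key a b a' hab).1),
      integral_finset_sum _ (fun b' _ => (key2 a b b' hab).1)]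
  rw [hint1, (hT1 a b hab).2]
  apply add_le_add (le_refl _)
  apply mul_le_mul_of_nonneg_left _ hk3nn
  apply add_le_add
  · rw [Finset.mul_sum]
    exact Finset.sum_le_sum fun a' _ => (key a b a' hab).2
  · rw [Finset.mul_sum]
    exact Finset.sum_le_sum fun b' _ => (key2 a b b' hab).2
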